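/- Let H be a complex Hilbert space and suppose T ∈ B(H) satisfies sup_{n∈ℤ₊} (‖T^{n+1}h‖² − ‖Tⁿh‖²) < ∞ for every h ∈ H. Then α_T(h) := sup_{n∈ℤ₊}(‖T^{n+1}h‖² − ‖Tⁿh‖²) ≥ 0 for every h ∈ H, and the spectral radius of T satisfies r(T) ≤ 1. -/

import Mathlib

open MeasureTheory Filter Topology ContinuousLinearMap

noncomputable section

/-- Proposition `zen-jesz-nie`: if `T ∈ B(H)` satisfies
`sup_n (‖T^{n+1}h‖² - ‖Tⁿh‖²) < ∞` for every `h ∈ H`, then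
`α_T(h) := sup_n (‖T^{n+1}h‖² - ‖Tⁿh‖²) ≥ 0` for every `h` and `r(T) ≤ 1`. -/
theorem sup_nonneg_and_spectralRadius_le_one {H : Type*} [NormedAddCommGroup H]
    [InnerProductSpace ℂ H] [CompleteSpace H] (T : H →L[ℂ] H)
    (hb : ∀ h : H, ∃ m : ℝ, ∀ n : ℕ, ‖(T ^ (n + 1)) h‖ ^ 2 - ‖(T ^ n) h‖ ^ 2 ≤ m) :
    (∀ h : H, 0 ≤ ⨆ n : ℕ, (‖(T ^ (n + 1)) h‖ ^ 2 - ‖(T ^ n) h‖ ^ 2)) ∧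
      spectralRadius ℂ T ≤ 1 := by
  constructor
  · -- nonnegativity of the supremum
    intro h
    obtain ⟨m, hm⟩ := hb h
    set d : ℕ → ℝ := fun n => ‖(T ^ (n + 1)) h‖ ^ 2 - ‖(T ^ n) h‖ ^ 2 with hd
    have hbdd : BddAbove (Set.range d) := ⟨m, by rintro _ ⟨n, rfl⟩; exact hm n⟩
    by_contra hneg
    push_neg at hneg
    set s : ℝ := ⨆ n, d n with hs
    have hle : ∀ n, d n ≤ s := fun n => le_ciSup hbdd n
    have key : ∀ N : ℕ, ‖(T ^ N) h‖ ^ 2 ≤ ‖h‖ ^ 2 + N * s := by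
      intro N
      induction N with
      | zero => simp
      | succ n ih =>
        have h1 : ‖(T ^ (n + 1)) h‖ ^ 2 - ‖(T ^ n) h‖ ^ 2 ≤ s := hle n
        rw [Nat.cast_succ]
        nlinarith [h1, ih]
    obtain ⟨N, hN⟩ := exists_nat_gt (‖h‖ ^ 2 / (-s))
    have hs0 : (0:ℝ) < -s := by linarith
    have h2 : ‖h‖ ^ 2 < N * (-s) := (div_lt_iff₀ hs0).mp hN
    have h3 := key N
    nlinarith [sq_nonneg ‖(T ^ N) h‖]
  · -- spectral radius bound
    rcases subsingleton_or_nontrivial H with hH | hH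
    · have : Subsingleton (H →L[ℂ] H) := ⟨fun f g => by ext x; exact Subsingleton.elim _ _⟩
      rw [spectrum.SpectralRadius.of_subsingleton]
      exact zero_le_one
    · -- pointwise polynomial growth
      have pt : ∀ h : H, ∃ K : ℝ, 0 ≤ K ∧ ∀ n : ℕ,
          ‖(T ^ n) h‖ ≤ Real.sqrt (n + 1) * Real.sqrt (‖h‖ ^ 2 + K) := by
        intro h
        obtain ⟨m, hm⟩ := hb h
        refine ⟨max m 0, le_max_right _ _, fun n => ?_⟩
        have key : ∀ N : ℕ, ‖(T ^ N) h‖ ^ 2 ≤ ‖h‖ ^ 2 + N * max m 0 := by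
          intro N
          induction N with
          | zero => simp
          | succ k ih =>
            have h1 := hm k
            have h2 : (0:ℝ) ≤ max m 0 := le_max_right _ _
            have h3 : m ≤ max m 0 := le_max_left _ _
            rw [Nat.cast_succ]
            nlinarith
        have hK : (0:ℝ) ≤ max m 0 := le_max_right _ _
        have hbound : ‖(T ^ n) h‖ ^ 2 ≤ ((n:ℝ) + 1) * (‖h‖ ^ 2 + max m 0) := by
          have := key n
          nlinarith [sq_nonneg ‖h‖, Nat.cast_nonneg (α := ℝ) n]
        calc ‖(T ^ n) h‖ = Real.sqrt (‖(T ^ n) h‖ ^ 2) := by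
              rw [Real.sqrt_sq (norm_nonneg _)]
          _ ≤ Real.sqrt (((n:ℝ) + 1) * (‖h‖ ^ 2 + max m 0)) := Real.sqrt_le_sqrt hbound
          _ = Real.sqrt ((n:ℝ) + 1) * Real.sqrt (‖h‖ ^ 2 + max m 0) :=
              Real.sqrt_mul (by positivity) _
      -- Banach–Steinhaus gives a uniform bound
      set g : ℕ → H →L[ℂ] H := fun n => ((Real.sqrt ((n:ℝ) + 1))⁻¹ : ℝ) • T ^ n with hg
      have hgb : ∀ h : H, ∃ C : ℝ, ∀ n, ‖g n h‖ ≤ C := by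
        intro h
        obtain ⟨K, hK0, hK⟩ := pt h
        refine ⟨Real.sqrt (‖h‖ ^ 2 + K), fun n => ?_⟩
        have hsq : (0:ℝ) < Real.sqrt ((n:ℝ) + 1) := Real.sqrt_pos.2 (by positivity)
        have heq : ‖g n h‖ = (Real.sqrt ((n:ℝ) + 1))⁻¹ * ‖(T ^ n) h‖ := by
          simp [hg, norm_smul, abs_of_nonneg (inv_nonneg.2 hsq.le)]
        rw [heq, inv_mul_le_iff₀ hsq]
        exact hK n
      obtain ⟨C', hC'⟩ := banach_steinhaus hgb
      have hTn : ∀ n : ℕ, ‖T ^ n‖ ≤ C' * Real.sqrt ((n:ℝ) + 1) := by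
        intro n
        have hsq : (0:ℝ) < Real.sqrt ((n:ℝ) + 1) := Real.sqrt_pos.2 (by positivity)
        have heq : ‖g n‖ = (Real.sqrt ((n:ℝ) + 1))⁻¹ * ‖T ^ n‖ := by
          simp [hg, norm_smul, abs_of_nonneg (inv_nonneg.2 hsq.le)]
        have h0 := hC' n
        rw [heq, inv_mul_le_iff₀ hsq] at h0
        nlinarith
      set C : ℝ := max C' 1 with hC
      have hC1 : (1:ℝ) ≤ C := le_max_right _ _
      have hC0 : (0:ℝ) < C := lt_of_lt_of_le one_pos hC1
      have hTn' : ∀ n : ℕ, ‖T ^ (n + 1)‖ ≤ C * Real.sqrt ((n:ℝ) + 2) := by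
        intro n
        have h0 := hTn (n + 1)
        have hsq : (0:ℝ) ≤ Real.sqrt ((n:ℝ) + 2) := Real.sqrt_nonneg _
        have : ((n + 1 : ℕ) : ℝ) + 1 = (n:ℝ) + 2 := by push_cast; ring
        rw [this] at h0
        nlinarith [le_max_left C' 1]
      set b : ℕ → ENNReal := fun n =>
        ENNReal.ofReal ((C * Real.sqrt ((n:ℝ) + 2)) ^ ((1:ℝ) / ((n:ℝ) + 1))) with hbdef
      have hr : ∀ n : ℕ, spectralRadius ℂ T ≤ b n := by
        intro n
        have h0 := spectrum.spectralRadius_le_pow_nnnorm_pow_one_div ℂ T n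
        rw [nnnorm_one, ENNReal.coe_one, ENNReal.one_rpow, mul_one] at h0
        refine h0.trans ?_
        rw [← ENNReal.ofReal_coe_nnreal, coe_nnnorm,
          ENNReal.ofReal_rpow_of_nonneg (norm_nonneg _) (by positivity)]
        exact ENNReal.ofReal_le_ofReal
          (Real.rpow_le_rpow (norm_nonneg _) (hTn' n) (by positivity))
      have hreal : Tendsto (fun n : ℕ =>
          (C * Real.sqrt ((n:ℝ) + 2)) ^ ((1:ℝ) / ((n:ℝ) + 1))) atTop (𝓝 1) := by
        have hpos : ∀ n : ℕ, (0:ℝ) < C * Real.sqrt ((n:ℝ) + 2) := fun n =>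
          mul_pos hC0 (Real.sqrt_pos.2 (by positivity))
        have heq : ∀ n : ℕ, (C * Real.sqrt ((n:ℝ) + 2)) ^ ((1:ℝ) / ((n:ℝ) + 1)) =
            Real.exp ((Real.log C + Real.log ((n:ℝ) + 2) / 2) * (1 / ((n:ℝ) + 1))) := by
          intro n
          rw [Real.rpow_def_of_pos (hpos n),
            Real.log_mul (ne_of_gt hC0) (ne_of_gt (Real.sqrt_pos.2 (by positivity))),
            Real.log_sqrt (by positivity)]
        have t1 : Tendsto (fun n : ℕ => Real.log C / ((n:ℝ) + 1)) atTop (𝓝 0) := by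
          have := (tendsto_const_div_atTop_nhds_zero_nat (Real.log C)).comp
            (tendsto_add_atTop_nat 1)
          refine this.congr fun n => ?_
          simp [Function.comp]
        have t2 : Tendsto (fun n : ℕ => Real.log ((n:ℝ) + 2) / ((n:ℝ) + 1)) atTop (𝓝 0) := by
          have h00 := Real.tendsto_pow_log_div_mul_add_atTop 1 (-1) 1 one_ne_zero
          have hcomp : Tendsto (fun n : ℕ => (n:ℝ) + 2) atTop atTop :=
            tendsto_atTop_add_const_right atTop 2 tendsto_natCast_atTop_atTop
          have := h00.comp hcomp
          refine this.congr fun n => ?_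
          simp [Function.comp]
          ring_nf
        have h1 : Tendsto (fun n : ℕ =>
            (Real.log C + Real.log ((n:ℝ) + 2) / 2) * (1 / ((n:ℝ) + 1))) atTop (𝓝 0) := by
          have h1' := t1.add (t2.div_const 2)
          rw [show (0:ℝ) + 0 / 2 = 0 by ring] at h1'
          refine h1'.congr fun n => ?_
          ring
        have := (Real.continuous_exp.tendsto 0).comp h1
        rw [Real.exp_zero] at this
        exact (this.congr fun n => (heq n).symm)
      have htends : Tendsto b atTop (𝓝 1) := by
        have := ENNReal.tendsto_ofReal hreal
        rwa [ENNReal.ofReal_one] at this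
      exact ge_of_tendsto' htends hr

end
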